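/- Let q be a prime power, r, m ≥ 1, and let v ∈ F_q^r be a vector with exactly κ nonzero entries. The number of tuples of 2m vectors (x_1, y_1, …, x_m, y_m) ∈ (F_q^r)^{2m} such that Σ_{i=1}^m (x_i ⊙ y_i) = v, where ⊙ denotes coordinate-wise (Hadamard) multiplication, equals q^{r(m−1)} (q^m − 1)^κ (q^m + q − 1)^{r−κ}. -/

import Mathlib

open Finset

/-- count of m-tuples of pairs with sum of products equal to c -/
def Ncnt (F : Type*) [Field F] [Fintype F] [DecidableEq F] (n : ℕ) (c : F) : ℕ :=
  (Finset.univ.filter (fun h : Fin n → F × F => ∑ i, (h i).1 * (h i).2 = c)).card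

lemma card_filter_prod {α β : Type*} [Fintype α] [Fintype β] (P : α × β → Prop) [DecidablePred P] :
    (Finset.univ.filter P).card = ∑ a : α, (Finset.univ.filter fun b => P (a, b)).card := by
  simp_rw [Finset.card_filter]
  exact Fintype.sum_prod_type _

lemma Ncnt_zero (F : Type*) [Field F] [Fintype F] [DecidableEq F] (c : F) :
    Ncnt F 0 c = if c = 0 then 1 else 0 := by
  rw [Ncnt]
  by_cases h : c = 0 <;> simp [h, eq_comm]

lemma Ncnt_total (F : Type*) [Field F] [Fintype F] [DecidableEq F] (n : ℕ) :
    ∑ c : F, Ncnt F n c = Fintype.card F ^ (2 * n) := by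
  have h := (Finset.card_eq_sum_card_fiberwise
    (f := fun h : Fin n → F × F => ∑ i, (h i).1 * (h i).2) (s := Finset.univ)
    (t := Finset.univ) (fun x _ => Finset.mem_univ _))
  simp only [Ncnt]
  rw [← h, Finset.card_univ, Fintype.card_fun, Fintype.card_prod, two_mul, pow_add, mul_pow, Fintype.card_fin]

lemma Ncnt_rec (F : Type*) [Field F] [Fintype F] [DecidableEq F] (n : ℕ) (c : F) :
    Ncnt F (n + 1) c
      = Fintype.card F * Ncnt F n c
        + (Fintype.card F - 1) * Fintype.card F ^ (2 * n) := by
  classical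
  have h1 : Ncnt F (n + 1) c = ∑ a : F × F, Ncnt F n (c - a.1 * a.2) := by
    have he : Ncnt F (n + 1) c =
        (Finset.univ.filter (fun p : (F × F) × (Fin n → F × F) =>
          p.1.1 * p.1.2 + ∑ i, (p.2 i).1 * (p.2 i).2 = c)).card := by
      rw [Ncnt]
      apply Finset.card_equiv (Fin.consEquiv (fun _ => F × F)).symm
      intro f
      simp [Fin.sum_univ_succ, Fin.consEquiv, Fin.tail]
    rw [he, card_filter_prod]
    refine Finset.sum_congr rfl fun a _ => ?_
    rw [Ncnt]
    congr 1
    apply Finset.filter_congr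
    intro h _
    simp [eq_sub_iff_add_eq']
  rw [h1, Fintype.sum_prod_type]
  rw [← Finset.sum_filter_add_sum_filter_not Finset.univ (fun x : F => x = 0)]
  have e0 : Finset.univ.filter (fun x : F => x = 0) = {0} := by
    ext x; simp
  have hzero : ∑ x ∈ Finset.univ.filter (fun x : F => x = 0),
      ∑ y : F, Ncnt F n (c - x * y) = Fintype.card F * Ncnt F n c := by
    rw [e0]
    simp [Finset.sum_const, Finset.card_univ, mul_comm]
  have hne : ∀ x : F, x ≠ 0 →
      ∑ y : F, Ncnt F n (c - x * y) = Fintype.card F ^ (2 * n) := by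
    intro x hx
    rw [← Ncnt_total F n]
    apply Fintype.sum_equiv ((Equiv.mulLeft₀ x hx).trans (Equiv.subLeft c))
    intro y
    rfl
  have hsum2 : ∑ x ∈ Finset.univ.filter (fun x : F => ¬ x = 0),
      ∑ y : F, Ncnt F n (c - x * y) = (Fintype.card F - 1) * Fintype.card F ^ (2 * n) := by
    rw [Finset.sum_congr rfl (fun x hx => hne x (by simpa using (Finset.mem_filter.1 hx).2))]
    rw [Finset.sum_const, smul_eq_mul]
    congr 1
    have : (Finset.univ.filter (fun x : F => ¬ x = 0)) = ({0}ᶜ : Finset F) := by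
      ext x; simp
    rw [this, Finset.card_compl, Finset.card_singleton]
  rw [hzero, hsum2]

lemma Ncnt_closed (F : Type*) [Field F] [Fintype F] [DecidableEq F] (n : ℕ) (c : F) :
    Ncnt F (n + 1) c
      = Fintype.card F ^ n * (Fintype.card F ^ (n + 1) - 1)
        + if c = 0 then Fintype.card F ^ (n + 1) else 0 := by
  have hq : 1 ≤ Fintype.card F := Fintype.card_pos
  induction n with
  | zero =>
    rw [Ncnt_rec, Ncnt_zero]
    by_cases h : c = 0 <;> simp [h] <;> ring_nf <;> omega
  | succ n ih =>
    rw [Ncnt_rec, ih]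
    set q := Fintype.card F with hqdef
    have h1 : 1 ≤ q ^ (n + 1) := Nat.one_le_pow _ _ hq
    have h2 : 1 ≤ q ^ (n + 2) := Nat.one_le_pow _ _ hq
    by_cases h : c = 0 <;> simp only [h, if_true, if_false] <;>
      zify [h1, h2, hq] <;> ring

def coordSwap (F : Type*) (r m : ℕ) :
    (Fin m → (Fin r → F) × (Fin r → F)) ≃ (Fin r → Fin m → F × F) where
  toFun f := fun j i => ((f i).1 j, (f i).2 j)
  invFun g := fun i => (fun j => (g j i).1, fun j => (g j i).2)
  left_inv f := rfl
  right_inv g := rfl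

theorem elementwise_psi
    (F : Type*) [Field F] [Fintype F] [DecidableEq F]
    (r m : ℕ) (hr : 1 ≤ r) (hm : 1 ≤ m)
    (v : Fin r → F)
    (κ : ℕ) (hκ : κ = (Finset.univ.filter (fun j : Fin r => v j ≠ 0)).card) :
    (Finset.univ.filter
        (fun f : Fin m → (Fin r → F) × (Fin r → F) =>
          ∑ i, (f i).1 * (f i).2 = v)).card
      = Fintype.card F ^ (r * (m - 1)) * (Fintype.card F ^ m - 1) ^ κ *
          (Fintype.card F ^ m + Fintype.card F - 1) ^ (r - κ) := by
  classical
  set q := Fintype.card F with hq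
  have hq1 : 1 ≤ q := Fintype.card_pos
  have key : (Finset.univ.filter
      (fun f : Fin m → (Fin r → F) × (Fin r → F) =>
        ∑ i, (f i).1 * (f i).2 = v)).card = ∏ j : Fin r, Ncnt F m (v j) := by
    have hcard : (Finset.univ.filter
        (fun f : Fin m → (Fin r → F) × (Fin r → F) =>
          ∑ i, (f i).1 * (f i).2 = v)).card =
        (Fintype.piFinset (fun j : Fin r => Finset.univ.filter
           (fun h : Fin m → F × F => ∑ i, (h i).1 * (h i).2 = v j))).card := by
      apply Finset.card_equiv (coordSwap F r m)
      intro f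
      simp only [Finset.mem_filter, Finset.mem_univ, true_and, Fintype.mem_piFinset,
        coordSwap, Equiv.coe_fn_mk, funext_iff, Finset.sum_apply, Pi.mul_apply]
    rw [hcard, Fintype.card_piFinset]
    simp [Ncnt]
  rw [key, ← Finset.prod_filter_mul_prod_filter_not Finset.univ (fun j => v j ≠ 0)]
  obtain ⟨m', rfl⟩ : ∃ m', m = m' + 1 := ⟨m - 1, (Nat.succ_pred_eq_of_pos hm).symm⟩
  have h1 : 1 ≤ q ^ (m' + 1) := Nat.one_le_pow _ _ hq1
  have hA : ∀ j ∈ Finset.univ.filter (fun j : Fin r => v j ≠ 0),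
      Ncnt F (m' + 1) (v j) = q ^ m' * (q ^ (m' + 1) - 1) := by
    intro j hj
    rw [Ncnt_closed, if_neg (by simpa using (Finset.mem_filter.1 hj).2)]
    simp [hq]
  have hB : ∀ j ∈ Finset.univ.filter (fun j : Fin r => ¬ v j ≠ 0),
      Ncnt F (m' + 1) (v j) = q ^ m' * (q ^ (m' + 1) + q - 1) := by
    intro j hj
    rw [Ncnt_closed, if_pos (by simpa using (Finset.mem_filter.1 hj).2)]
    rw [← hq]
    zify [h1, hq1, Nat.le_trans h1 (Nat.le_add_right _ q)]
    ring
  rw [Finset.prod_congr rfl hA, Finset.prod_congr rfl hB,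
    Finset.prod_const, Finset.prod_const, ← hκ]
  have hκr : κ ≤ r := by
    rw [hκ]
    simpa using Finset.card_filter_le (Finset.univ : Finset (Fin r)) _
  have hcompl : (Finset.univ.filter (fun j : Fin r => ¬ v j ≠ 0)).card = r - κ := by
    have h2 : (Finset.univ.filter (fun j : Fin r => v j ≠ 0)).card
        + (Finset.univ.filter (fun j : Fin r => ¬ v j ≠ 0)).card = r := by
      classical
      rw [Finset.card_filter_add_card_filter_not, Finset.card_univ,
        Fintype.card_fin]
    rw [hκ]
    exact Nat.eq_sub_of_add_eq' h2
  rw [hcompl]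
  have hmm : m' + 1 - 1 = m' := rfl
  rw [hmm, mul_pow, mul_pow]
  rw [show q ^ (r * m') = (q ^ m') ^ κ * (q ^ m') ^ (r - κ) by
    rw [← pow_add, Nat.add_sub_cancel' hκr, ← pow_mul, mul_comm]]
  generalize q ^ (m' + 1) - 1 = A
  generalize q ^ (m' + 1) + q - 1 = B
  ring
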